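/- arXiv:2107.02269 — 2 statements merged into one kernel-verified Lean document; each statement's English description precedes it below -/
import Mathlib

section
/- Let F ∈ C²((-1,1)) with F'' ≥ c₀ > 0, and let F_ε be its cubic extension as above. Then there exist constants k₁ > 0 and k₂ ≥ 0, independent of ε ∈ (0,1], such that F_ε(s) ≥ k₁|s|³ - k₂ for all s ∈ ℝ. -/
/-- The cubic-growth extension `F_ε` of a singular potential `F : (-1,1) → ℝ`. -/
noncomputable def cubicExt (F : ℝ → ℝ) (ε : ℝ) (s : ℝ) : ℝ :=
  if 1 - ε ≤ s then
    F (1 - ε) + deriv F (1 - ε) * (s - (1 - ε))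
      + 1 / 2 * deriv (deriv F) (1 - ε) * (s - (1 - ε)) ^ 2
      + (s - (1 - ε)) ^ 3
  else if s ≤ -1 + ε then
    F (-1 + ε) + deriv F (-1 + ε) * (s - (-1 + ε))
      + 1 / 2 * deriv (deriv F) (-1 + ε) * (s - (-1 + ε)) ^ 2
      + |s - (-1 + ε)| ^ 3
  else F s

lemma aux_bt (B t : ℝ) (hB : 0 ≤ B) (ht : 0 ≤ t) : B * t ≤ t ^ 3 / 2 + B ^ 2 + B := by
  rcases le_or_gt t (B + 1) with h | h
  · nlinarith [pow_nonneg ht 3]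
  · nlinarith [mul_nonneg ht ht, mul_nonneg hB hB, mul_nonneg (mul_nonneg ht ht) ht]

lemma aux_cube (x t : ℝ) (hx : 0 ≤ x) (h : x ≤ 1 + t) (ht : 0 ≤ t) :
    x ^ 3 ≤ 4 + 4 * t ^ 3 := by
  have h1 : x ^ 3 ≤ (1 + t) ^ 3 := pow_le_pow_left₀ hx h 3
  nlinarith [sq_nonneg (1 - t), mul_nonneg (mul_nonneg ht ht) ht]


lemma aux_right (s a t B c₀ Fa F0 dFa dF0 ddFa aF0 : ℝ)
    (hcube : s ^ 3 ≤ 4 + 4 * t ^ 3)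
    (hd2 : c₀ * t ^ 2 ≤ ddFa * t ^ 2)
    (hd1 : dF0 * t ≤ dFa * t)
    (hd1' : -(B * t) ≤ dF0 * t)
    (hbt : B * t ≤ t ^ 3 / 2 + B ^ 2 + B)
    (htanA : F0 + dF0 * a ≤ Fa)
    (hda : -B ≤ dF0 * a)
    (hsq : 0 ≤ c₀ * t ^ 2)
    (hF0 : -aF0 ≤ F0) :
    1 / 8 * s ^ 3 - (1 / 2 + 2 * B + B ^ 2 + aF0)
      ≤ Fa + dFa * t + 1 / 2 * ddFa * t ^ 2 + t ^ 3 := by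
  linarith

lemma aux_left (s a t B c₀ Fa F0 dFa dF0 ddFa aF0 : ℝ)
    (hcube : (-s) ^ 3 ≤ 4 + 4 * t ^ 3)
    (hd2 : c₀ * t ^ 2 ≤ ddFa * t ^ 2)
    (hd1 : dFa * t ≤ dF0 * t)
    (hd1' : dF0 * t ≤ B * t)
    (hbt : B * t ≤ t ^ 3 / 2 + B ^ 2 + B)
    (htanA : F0 + dF0 * a ≤ Fa)
    (hda : -B ≤ dF0 * a)
    (hsq : 0 ≤ c₀ * t ^ 2)
    (hF0 : -aF0 ≤ F0) :
    1 / 8 * (-s) ^ 3 - (1 / 2 + 2 * B + B ^ 2 + aF0)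
      ≤ Fa + dFa * (-t) + 1 / 2 * ddFa * (-t) ^ 2 + t ^ 3 := by
  have h : (-t) ^ 2 = t ^ 2 := by ring
  rw [h]
  nlinarith

lemma aux_mid (s B Fs F0 dF0 aF0 : ℝ)
    (hcube : |s| ^ 3 ≤ 1)
    (htanA : F0 + dF0 * s ≤ Fs)
    (hda : -B ≤ dF0 * s)
    (hB0 : 0 ≤ B)
    (hF0 : -aF0 ≤ F0) :
    1 / 8 * |s| ^ 3 - (1 / 2 + 2 * B + B ^ 2 + aF0) ≤ Fs := by
  nlinarith [sq_nonneg B]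

/-- If `F ∈ C²((-1,1))` with `F'' ≥ c₀ > 0`, then there are constants
`k₁ > 0` and `k₂ ≥ 0`, independent of `ε ∈ (0,1]`, such that
`F_ε(s) ≥ k₁|s|³ - k₂` for all `s ∈ ℝ`. -/
theorem cubicExt_cubic_growth (F : ℝ → ℝ) (c₀ : ℝ) (hc₀ : 0 < c₀)
    (hF : ContDiffOn ℝ 2 F (Set.Ioo (-1) 1))
    (hF'' : ∀ s ∈ Set.Ioo (-1 : ℝ) 1, c₀ ≤ deriv (deriv F) s) :
    ∃ k₁ > (0 : ℝ), ∃ k₂ ≥ (0 : ℝ),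
      ∀ ε ∈ Set.Ioc (0 : ℝ) 1, ∀ s : ℝ,
        k₁ * |s| ^ 3 - k₂ ≤ cubicExt F ε s := by
  set I : Set ℝ := Set.Ioo (-1 : ℝ) 1 with hI
  have hIo : IsOpen I := isOpen_Ioo
  have hFd : DifferentiableOn ℝ F I := hF.differentiableOn (by norm_num)
  have hF'cd : ContDiffOn ℝ 1 (deriv F) I := hF.deriv_of_isOpen hIo (by norm_num)
  have hF'cont : ContinuousOn (deriv F) I := hF'cd.continuousOn
  -- deriv F is monotone on I
  have hmono : MonotoneOn (deriv F) I := by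
    have := strictMonoOn_of_deriv_pos (convex_Ioo (-1 : ℝ) 1) hF'cont (fun x hx => by
      rw [interior_Ioo] at hx
      exact lt_of_lt_of_le hc₀ (hF'' x hx))
    exact this.monotoneOn
  -- tangent line at 0
  have htan : ∀ s ∈ I, F 0 + deriv F 0 * s ≤ F s := by
    have h0I : (0 : ℝ) ∈ I := by constructor <;> norm_num
    set g : ℝ → ℝ := fun x => F x - deriv F 0 * x with hg
    have hgd : ∀ x ∈ I, DifferentiableAt ℝ F x ∧ deriv g x = deriv F x - deriv F 0 := by
      intro x hx
      have hdx : DifferentiableAt ℝ F x := (hFd x hx).differentiableAt (hIo.mem_nhds hx)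
      refine ⟨hdx, ?_⟩
      have : deriv g x = deriv F x - deriv F 0 * 1 := by
        apply HasDerivAt.deriv
        exact (hdx.hasDerivAt.sub ((hasDerivAt_id x).const_mul (deriv F 0)))
      simpa using this
    have hgc : ContinuousOn g I := by
      apply ContinuousOn.sub hFd.continuousOn
      exact (continuous_const.mul continuous_id).continuousOn
    have hmr : MonotoneOn g (Set.Ico 0 1) := by
      apply monotoneOn_of_deriv_nonneg (convex_Ico 0 1)
      · exact hgc.mono (fun x hx => ⟨by linarith [hx.1], hx.2⟩)
      · rw [interior_Ico]
        intro x hx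
        have hxI : x ∈ I := ⟨by linarith [hx.1], hx.2⟩
        exact ((hgd x hxI).1.sub ((differentiable_id.const_mul _) x)).differentiableWithinAt
      · rw [interior_Ico]
        intro x hx
        have hxI : x ∈ I := ⟨by linarith [hx.1], hx.2⟩
        rw [(hgd x hxI).2]
        have := hmono h0I hxI (le_of_lt hx.1)
        linarith
    have hml : AntitoneOn g (Set.Ioc (-1) 0) := by
      apply antitoneOn_of_deriv_nonpos (convex_Ioc (-1) 0)
      · exact hgc.mono (fun x hx => ⟨hx.1, by linarith [hx.2]⟩)
      · rw [interior_Ioc]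
        intro x hx
        have hxI : x ∈ I := ⟨hx.1, by linarith [hx.2]⟩
        exact ((hgd x hxI).1.sub ((differentiable_id.const_mul _) x)).differentiableWithinAt
      · rw [interior_Ioc]
        intro x hx
        have hxI : x ∈ I := ⟨hx.1, by linarith [hx.2]⟩
        rw [(hgd x hxI).2]
        have := hmono hxI h0I (le_of_lt hx.2)
        linarith
    intro s hs
    rcases le_or_gt 0 s with h | h
    · have := hmr ⟨le_refl 0, by norm_num⟩ ⟨h, hs.2⟩ h
      simp only [hg] at this; linarith
    · have := hml ⟨hs.1, le_of_lt h⟩ ⟨by norm_num, le_refl 0⟩ (le_of_lt h)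
      simp only [hg] at this; linarith
  set B : ℝ := |deriv F 0| with hB
  have hB0 : 0 ≤ B := abs_nonneg _
  have hBl : -B ≤ deriv F 0 := neg_abs_le _
  have hBr : deriv F 0 ≤ B := le_abs_self _
  refine ⟨1/8, by norm_num, 1/2 + 2*B + B^2 + |F 0|, by positivity, ?_⟩
  intro ε hε s
  obtain ⟨hε0, hε1⟩ := hε
  have h0I : (0 : ℝ) ∈ I := by constructor <;> norm_num
  have hF0 : -|F 0| ≤ F 0 := neg_abs_le _
  unfold cubicExt
  split_ifs with h1 h2
  · -- right branch: a = 1 - ε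
    set a : ℝ := 1 - ε with ha
    have haI : a ∈ I := ⟨by simp only [ha]; linarith, by simp only [ha]; linarith⟩
    have ha0 : 0 ≤ a := by simp only [ha]; linarith
    have ha1 : a ≤ 1 := by simp only [ha]; linarith
    set t : ℝ := s - a with htdef
    have ht : 0 ≤ t := by simp only [htdef]; linarith
    have hs0 : 0 ≤ s := by linarith
    have habs : |s| = s := abs_of_nonneg hs0
    have hcube : s ^ 3 ≤ 4 + 4 * t ^ 3 := aux_cube s t hs0 (by linarith) ht
    have hd2 : c₀ * t^2 ≤ deriv (deriv F) a * t^2 :=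
      mul_le_mul_of_nonneg_right (hF'' a haI) (sq_nonneg t)
    have hd1 : deriv F 0 * t ≤ deriv F a * t :=
      mul_le_mul_of_nonneg_right (hmono h0I haI ha0) ht
    have hd1' : -(B * t) ≤ deriv F 0 * t := by nlinarith
    have hbt : B * t ≤ t ^ 3 / 2 + B ^ 2 + B := aux_bt B t hB0 ht
    have htanA : F 0 + deriv F 0 * a ≤ F a := htan a haI
    have hda : -B ≤ deriv F 0 * a := by nlinarith
    have hsq : 0 ≤ c₀ * t^2 := mul_nonneg (le_of_lt hc₀) (sq_nonneg t)
    rw [habs]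
    exact aux_right s a t B c₀ (F a) (F 0) (deriv F a) (deriv F 0) (deriv (deriv F) a) (|F 0|)
      hcube hd2 hd1 hd1' hbt htanA hda hsq hF0
  · -- left branch: a = -1 + ε
    set a : ℝ := -1 + ε with ha
    have haI : a ∈ I := ⟨by simp only [ha]; linarith, by simp only [ha]; linarith⟩
    have ha0 : a ≤ 0 := by simp only [ha]; linarith
    have ha1 : -1 ≤ a := by simp only [ha]; linarith
    set t : ℝ := a - s with htdef
    have ht : 0 ≤ t := by simp only [htdef]; linarith
    have hs0 : s ≤ 0 := by linarith
    have habs : |s| = -s := abs_of_nonpos hs0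
    have habs2 : |s - a| = t := by rw [abs_of_nonpos (by linarith)]; simp [htdef]
    have hcube : (-s) ^ 3 ≤ 4 + 4 * t ^ 3 := aux_cube (-s) t (by linarith) (by linarith) ht
    have hd2 : c₀ * t^2 ≤ deriv (deriv F) a * t^2 :=
      mul_le_mul_of_nonneg_right (hF'' a haI) (sq_nonneg t)
    have hd1 : deriv F a * t ≤ deriv F 0 * t :=
      mul_le_mul_of_nonneg_right (hmono haI h0I ha0) ht
    have hd1' : deriv F 0 * t ≤ B * t := by nlinarith
    have hbt : B * t ≤ t ^ 3 / 2 + B ^ 2 + B := aux_bt B t hB0 ht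
    have htanA : F 0 + deriv F 0 * a ≤ F a := htan a haI
    have hda : -B ≤ deriv F 0 * a := by nlinarith
    have hsq : 0 ≤ c₀ * t^2 := mul_nonneg (le_of_lt hc₀) (sq_nonneg t)
    have hexp : s - a = -t := by simp [htdef]
    rw [habs, habs2, hexp]
    exact aux_left s a t B c₀ (F a) (F 0) (deriv F a) (deriv F 0) (deriv (deriv F) a) (|F 0|)
      hcube hd2 hd1 hd1' hbt htanA hda hsq hF0
  · -- middle branch
    have hsI : s ∈ I := ⟨by linarith, by linarith⟩
    have habs : |s| ≤ 1 := by
      rw [abs_le]; constructor <;> [linarith [hsI.1]; linarith [hsI.2]]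
    have hcube : |s| ^ 3 ≤ 1 := pow_le_one₀ (abs_nonneg s) habs
    have htanA : F 0 + deriv F 0 * s ≤ F s := htan s hsI
    have hda : -B ≤ deriv F 0 * s := by
      have h1 : |deriv F 0 * s| ≤ B := by
        rw [abs_mul]
        calc |deriv F 0| * |s| ≤ B * 1 := by
              apply mul_le_mul (le_refl B) habs (abs_nonneg s) hB0
          _ = B := mul_one B
      linarith [neg_abs_le (deriv F 0 * s)]
    exact aux_mid s B (F s) (F 0) (deriv F 0) (|F 0|) hcube htanA hda hB0 hF0
end

section
/- Let p ≥ 2, q > p, and α ∈ (0,1). Fix k > 2 and ρ > k/α with ρ satisfying ρ > (q/(q-2))(k-2). Define β(k,ρ) = (p/q)·((q-2)ρ - q(k-2)) / (2(p-1)ρ - p(k-2)). Then the infimum of β over the region R = {(k,ρ) : k > 2, ρ > k/α} equals β* = (p/q)·((1-α)q - 2)/((2-α)p - 2), and this infimum is not attained. -/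
/-- two-dimensional exponent optimization. For `p ≥ 2`, `q > p`
(with `q > 2p` as assumed in the construction `q = p(1+p/ε)`, `ε < p`) and `α ∈ (0,1)`,
the infimum of `β(k,ρ) = (p/q)·((q-2)ρ - q(k-2)) / (2(p-1)ρ - p(k-2))` over the region
`R = {(k,ρ) : k > 2, ρ > k/α}` equals `β* = (p/q)·((1-α)q - 2)/((2-α)p - 2)`, and
this infimum is not attained. -/
theorem beta_infimum_2d (p q α : ℝ) (hp : 2 ≤ p) (hq : p < q) (hq2 : 2 * p < q)
    (hα : α ∈ Set.Ioo (0 : ℝ) 1) :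
    IsGLB {x : ℝ | ∃ k ρ : ℝ, 2 < k ∧ k / α < ρ ∧
        x = (p / q) * (((q - 2) * ρ - q * (k - 2)) / (2 * (p - 1) * ρ - p * (k - 2)))}
      ((p / q) * (((1 - α) * q - 2) / ((2 - α) * p - 2))) ∧
    (p / q) * (((1 - α) * q - 2) / ((2 - α) * p - 2)) ∉
      {x : ℝ | ∃ k ρ : ℝ, 2 < k ∧ k / α < ρ ∧
        x = (p / q) * (((q - 2) * ρ - q * (k - 2)) / (2 * (p - 1) * ρ - p * (k - 2)))} := by
  obtain ⟨hα0, hα1⟩ := hα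
  have hp0 : 0 < p := by linarith
  have hq0 : 0 < q := by linarith
  have hpq : 0 < p / q := div_pos hp0 hq0
  have hDs : 0 < (2 - α) * p - 2 := by nlinarith
  have hkey : 0 < p * q + 2 * p - 2 * q := by nlinarith
  -- strict lower bound on every element of the set
  have hlb : ∀ x ∈ {x : ℝ | ∃ k ρ : ℝ, 2 < k ∧ k / α < ρ ∧
      x = (p / q) * (((q - 2) * ρ - q * (k - 2)) / (2 * (p - 1) * ρ - p * (k - 2)))},
      (p / q) * (((1 - α) * q - 2) / ((2 - α) * p - 2)) < x := by
    rintro x ⟨k, ρ, hk, hρ, rfl⟩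
    have hρ0 : 0 < ρ := lt_trans (div_pos (by linarith) hα0) hρ
    have hkαρ : k < α * ρ := by
      have := (div_lt_iff₀ hα0).mp hρ
      linarith [this]
    have hDe : 0 < 2 * (p - 1) * ρ - p * (k - 2) := by nlinarith
    have h2 : ((1 - α) * q - 2) / ((2 - α) * p - 2) <
        ((q - 2) * ρ - q * (k - 2)) / (2 * (p - 1) * ρ - p * (k - 2)) := by
      rw [div_lt_div_iff₀ hDs hDe]
      nlinarith [mul_pos hkey (show (0:ℝ) < α * ρ - k + 2 by linarith)]
    exact (mul_lt_mul_iff_right₀ hpq).mpr h2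
  -- the limiting sequence
  have hC : 0 < 2 * (p - 1) / α - p := by
    rw [sub_pos, lt_div_iff₀ hα0]
    nlinarith
  set A : ℝ := (q - 2) / α - q with hA
  set C : ℝ := 2 * (p - 1) / α - p with hCdef
  have hCne : C ≠ 0 := ne_of_gt hC
  have hAC : (p / q) * (A / C) = (p / q) * (((1 - α) * q - 2) / ((2 - α) * p - 2)) := by
    congr 1
    rw [div_eq_div_iff hCne (ne_of_gt hDs), hA, hCdef]
    field_simp
    ring
  have htend : Filter.Tendsto
      (fun t : ℝ => (p / q) * (((q - 2) * (t / α + 1) - q * (t - 2)) /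
        (2 * (p - 1) * (t / α + 1) - p * (t - 2)))) Filter.atTop
      (nhds ((p / q) * (A / C))) := by
    have h1 : Filter.Tendsto (fun t : ℝ => (A + (3 * q - 2) * t⁻¹) / (C + (4 * p - 2) * t⁻¹))
        Filter.atTop (nhds (A / C)) := by
      have hnum : Filter.Tendsto (fun t : ℝ => A + (3 * q - 2) * t⁻¹) Filter.atTop (nhds A) := by
        have := (tendsto_inv_atTop_zero (𝕜 := ℝ)).const_mul (3 * q - 2)
        simpa using tendsto_const_nhds.add this
      have hden : Filter.Tendsto (fun t : ℝ => C + (4 * p - 2) * t⁻¹) Filter.atTop (nhds C) := by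
        have := (tendsto_inv_atTop_zero (𝕜 := ℝ)).const_mul (4 * p - 2)
        simpa using tendsto_const_nhds.add this
      exact hnum.div hden hCne
    have heq : ∀ᶠ t : ℝ in Filter.atTop,
        (A + (3 * q - 2) * t⁻¹) / (C + (4 * p - 2) * t⁻¹) =
        ((q - 2) * (t / α + 1) - q * (t - 2)) / (2 * (p - 1) * (t / α + 1) - p * (t - 2)) := by
      filter_upwards [Filter.eventually_gt_atTop (0 : ℝ)] with t ht
      have hd1 : C + (4 * p - 2) * t⁻¹ > 0 :=
        add_pos hC (mul_pos (by linarith) (inv_pos.mpr ht))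
      have hd2 : 2 * (p - 1) * (t / α + 1) - p * (t - 2) > 0 := by
        have h3 : 2 * (p - 1) * (t / α + 1) - p * (t - 2) = C * t + (4 * p - 2) := by
          rw [hCdef]; field_simp; ring
        rw [h3]
        have := mul_pos hC ht
        nlinarith
      rw [div_eq_div_iff (ne_of_gt hd1) (ne_of_gt hd2)]
      rw [hA, hCdef]
      field_simp
      ring
    exact ((h1.congr' heq).const_mul (p / q))
  rw [hAC] at htend
  constructor
  · constructor
    · intro x hx
      exact (hlb x hx).le
    · intro b hb
      refine ge_of_tendsto htend ?_
      filter_upwards [Filter.eventually_gt_atTop (2 : ℝ)] with t ht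
      exact hb ⟨t, t / α + 1, ht, by linarith, rfl⟩
  · intro hmem
    exact lt_irrefl _ (hlb _ hmem)
end
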